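/- Let ξ(s) = (t(s), r(s), φ(s), ψ(s)) be a C² curve with values in Ω_sph, defined on an interval I, satisfying the geodesic equations of the Schwarzschild metric. Then the functions a(s) := (1 − R/r(s))·ṫ(s) and b(s) := r(s)²·U(s), where U(s) := √(φ̇(s)² + sin²φ(s)·ψ̇(s)²), are constant on I. -/

import Mathlib

noncomputable section

/-- Partial derivative of `f` in the `i`-th coordinate direction at `p`. -/
def coordPDeriv {n : ℕ} (f : (Fin n → ℝ) → ℝ) (i : Fin n) (p : Fin n → ℝ) : ℝ :=
  fderiv ℝ f p (Pi.single i 1)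

/-- Christoffel symbols `Γ^k_{ij}` of a metric `g` given in coordinates on (an open
subset of) `ℝⁿ`: `Γ^k_{ij} = (1/2) Σ_l g^{kl} (∂_i g_{jl} + ∂_j g_{il} − ∂_l g_{ij})`. -/
def christoffel {n : ℕ} (g : (Fin n → ℝ) → Matrix (Fin n) (Fin n) ℝ)
    (k i j : Fin n) (p : Fin n → ℝ) : ℝ :=
  (1 / 2) * ∑ l, (g p)⁻¹ k l *
    (coordPDeriv (fun q => g q j l) i p + coordPDeriv (fun q => g q i l) j p
      - coordPDeriv (fun q => g q i j) l p)

/-- The Schwarzschild metric in spherical coordinates `(t, r, φ, ψ)`. -/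
def schwMetric (R : ℝ) (p : Fin 4 → ℝ) : Matrix (Fin 4) (Fin 4) ℝ :=
  Matrix.diagonal
    ![1 - R / p 1, -(1 - R / p 1)⁻¹, -(p 1) ^ 2, -(p 1) ^ 2 * Real.sin (p 2) ^ 2]

/-- The coordinate chart `Ω_sph = {(t,r,φ,ψ) : r > R, 0 < φ < π}`. -/
def sphDomain (R : ℝ) : Set (Fin 4 → ℝ) :=
  {p | R < p 1 ∧ 0 < p 2 ∧ p 2 < Real.pi}

lemma coordPDeriv_const {n : ℕ} (c : ℝ) (i : Fin n) (p : Fin n → ℝ) :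
    coordPDeriv (fun _ => c) i p = 0 := by
  simp [coordPDeriv]

lemma coordPDeriv_comp {n : ℕ} {F : ℝ → ℝ} {F' : ℝ} {j : Fin n} {p : Fin n → ℝ}
    (hF : HasDerivAt F F' (p j)) (i : Fin n) :
    coordPDeriv (fun q => F (q j)) i p = if i = j then F' else 0 := by
  have hπ : HasFDerivAt (fun q : Fin n → ℝ => q j)
      (ContinuousLinearMap.proj j : (Fin n → ℝ) →L[ℝ] ℝ) p :=
    (ContinuousLinearMap.proj j : (Fin n → ℝ) →L[ℝ] ℝ).hasFDerivAt
  have h := hF.comp_hasFDerivAt p hπ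
  have h' : HasFDerivAt (fun q => F (q j)) (F' • (ContinuousLinearMap.proj j : (Fin n → ℝ) →L[ℝ] ℝ)) p := h
  rw [coordPDeriv, h'.fderiv]
  rcases eq_or_ne i j with h|h
  · simp [h, Pi.single_apply]
  · simp [h, Pi.single_apply, Ne.symm h]

lemma coordPDeriv_mul {n : ℕ} {f g : (Fin n → ℝ) → ℝ} {p : Fin n → ℝ}
    (hf : DifferentiableAt ℝ f p) (hg : DifferentiableAt ℝ g p) (i : Fin n) :
    coordPDeriv (fun q => f q * g q) i p
      = coordPDeriv f i p * g p + f p * coordPDeriv g i p := by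
  simp only [coordPDeriv, fderiv_fun_mul hf hg, ContinuousLinearMap.add_apply,
    ContinuousLinearMap.smul_apply, smul_eq_mul]
  ring


/-- the diagonal entries -/
def sv (R : ℝ) (p : Fin 4 → ℝ) : Fin 4 → ℝ :=
  ![1 - R / p 1, -(1 - R / p 1)⁻¹, -(p 1) ^ 2, -(p 1) ^ 2 * Real.sin (p 2) ^ 2]

/-- `Dv R p i j = ∂_i (sv j)` at `p`. -/
def Dv (R : ℝ) (p : Fin 4 → ℝ) (i j : Fin 4) : ℝ :=
  if i = 1 then
    ![R / p 1 ^ 2, -(R / p 1 ^ 2) / (1 - R / p 1) ^ 2 * (-1), -(2 * p 1),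
      -(2 * p 1) * Real.sin (p 2) ^ 2] j
  else if i = 2 ∧ j = 3 then -(p 1) ^ 2 * (2 * Real.sin (p 2) * Real.cos (p 2)) else 0

lemma hasDerivAt_sv0 (R x : ℝ) (hx : x ≠ 0) :
    HasDerivAt (fun y : ℝ => 1 - R / y) (R / x ^ 2) x := by
  have h : HasDerivAt (fun y : ℝ => 1 - R / y) (0 - (0 * x - R * 1) / x ^ 2) x :=
    (hasDerivAt_const x (1:ℝ)).sub (((hasDerivAt_const x R).div (hasDerivAt_id x) hx))
  convert h using 1
  field_simp
  ring

lemma hasDerivAt_sv1 (R x : ℝ) (hx : x ≠ 0) (hu : 1 - R / x ≠ 0) :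
    HasDerivAt (fun y : ℝ => -(1 - R / y)⁻¹) (-(R / x ^ 2) / (1 - R / x) ^ 2 * (-1)) x := by
  have h := ((hasDerivAt_sv0 R x hx).inv hu).neg
  refine h.congr_deriv (Eq.symm ?_)
  ring

lemma hasDerivAt_sv2 (x : ℝ) : HasDerivAt (fun y : ℝ => -y ^ 2) (-(2 * x)) x := by
  have h := (hasDerivAt_pow 2 x).neg
  refine h.congr_deriv (Eq.symm ?_)
  ring


lemma hasDerivAt_sin_sq (x : ℝ) :
    HasDerivAt (fun y : ℝ => Real.sin y ^ 2) (2 * Real.sin x * Real.cos x) x := by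
  have h := (Real.hasDerivAt_sin x).pow 2
  refine h.congr_deriv (Eq.symm ?_)
  ring

lemma entry_eq (R : ℝ) (q : Fin 4 → ℝ) (j l : Fin 4) :
    schwMetric R q j l = if j = l then sv R q j else 0 := by
  rw [schwMetric, Matrix.diagonal_apply]; rfl

lemma coordPDeriv_schwEntry (R : ℝ) (p : Fin 4 → ℝ) (hx : p 1 ≠ 0) (hu : 1 - R / p 1 ≠ 0)
    (i j l : Fin 4) :
    coordPDeriv (fun q => schwMetric R q j l) i p = if j = l then Dv R p i j else 0 := by
  simp only [entry_eq]
  fin_cases j <;> fin_cases l <;>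
      simp only [Fin.mk_one, Fin.isValue, Fin.reduceEq, if_false, if_true, reduceIte,
        coordPDeriv_const, ite_self, Fin.zero_eta, Fin.reduceFinMk]
  · -- (0,0)
    have h := coordPDeriv_comp (n := 4) (j := 1) (hasDerivAt_sv0 R (p 1) hx) i
    rw [show (fun q : Fin 4 → ℝ => sv R q 0) = (fun q : Fin 4 → ℝ => 1 - R / q 1) from rfl, h]
    rcases eq_or_ne i 1 with h1 | h1 <;> simp [Dv, h1]
  · -- (1,1)
    have h := coordPDeriv_comp (n := 4) (j := 1) (hasDerivAt_sv1 R (p 1) hx hu) i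
    rw [show (fun q : Fin 4 → ℝ => sv R q 1) = (fun q : Fin 4 → ℝ => -(1 - R / q 1)⁻¹) from rfl, h]
    rcases eq_or_ne i 1 with h1 | h1 <;> simp [Dv, h1]
  · -- (2,2)
    have h := coordPDeriv_comp (n := 4) (j := 1) (hasDerivAt_sv2 (p 1)) i
    rw [show (fun q : Fin 4 → ℝ => sv R q 2) = (fun q : Fin 4 → ℝ => -(q 1) ^ 2) from rfl, h]
    rcases eq_or_ne i 1 with h1 | h1 <;> simp [Dv, h1]
  · -- (3,3)
    have hf : DifferentiableAt ℝ (fun q : Fin 4 → ℝ => -(q 1) ^ 2) p := by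
      have : DifferentiableAt ℝ (fun q : Fin 4 → ℝ => q 1) p :=
        (ContinuousLinearMap.proj 1 : (Fin 4 → ℝ) →L[ℝ] ℝ).differentiableAt
      exact (this.pow 2).neg
    have hg : DifferentiableAt ℝ (fun q : Fin 4 → ℝ => Real.sin (q 2) ^ 2) p := by
      have h2 : DifferentiableAt ℝ (fun q : Fin 4 → ℝ => q 2) p :=
        (ContinuousLinearMap.proj 2 : (Fin 4 → ℝ) →L[ℝ] ℝ).differentiableAt
      exact ((Real.differentiable_sin.differentiableAt.comp p h2).pow 2)
    have hm := coordPDeriv_mul (p := p) hf hg i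
    have h1 := coordPDeriv_comp (n := 4) (j := 1) (hasDerivAt_sv2 (p 1)) i
    have h2 := coordPDeriv_comp (n := 4) (j := 2) (hasDerivAt_sin_sq (p 2)) i
    rw [show (fun q : Fin 4 → ℝ => sv R q 3)
        = (fun q : Fin 4 → ℝ => -(q 1) ^ 2 * Real.sin (q 2) ^ 2) from rfl, hm, h1, h2]
    rcases eq_or_ne i 1 with e1 | e1 <;> rcases eq_or_ne i 2 with e2 | e2 <;>
      simp [Dv, e1, e2]

lemma schw_inv_apply (R : ℝ) (p : Fin 4 → ℝ) (h : ∀ m : Fin 4, sv R p m ≠ 0) (k l : Fin 4) :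
    (schwMetric R p)⁻¹ k l = if k = l then (sv R p k)⁻¹ else 0 := by
  have : (schwMetric R p)⁻¹ = Matrix.diagonal (fun m => (sv R p m)⁻¹) := by
    apply Matrix.inv_eq_right_inv
    rw [show schwMetric R p = Matrix.diagonal (sv R p) from rfl, Matrix.diagonal_mul_diagonal]
    have : (fun m => sv R p m * (sv R p m)⁻¹) = fun _ => (1:ℝ) := by
      funext m; exact mul_inv_cancel₀ (h m)
    rw [this, Matrix.diagonal_one]
  rw [this, Matrix.diagonal_apply]

lemma christoffel_eval (R : ℝ) (p : Fin 4 → ℝ) (hx : p 1 ≠ 0) (hu : 1 - R / p 1 ≠ 0)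
    (h : ∀ m : Fin 4, sv R p m ≠ 0) (k i j : Fin 4) :
    christoffel (schwMetric R) k i j p
      = (1 / 2) * (sv R p k)⁻¹ *
        ((if j = k then Dv R p i j else 0) + (if i = k then Dv R p j i else 0)
          - (if i = j then Dv R p k i else 0)) := by
  rw [christoffel]
  have : ∀ l : Fin 4, (schwMetric R p)⁻¹ k l *
      (coordPDeriv (fun q => schwMetric R q j l) i p
        + coordPDeriv (fun q => schwMetric R q i l) j p
        - coordPDeriv (fun q => schwMetric R q i j) l p)
      = if k = l then (sv R p k)⁻¹ *
          ((if j = l then Dv R p i j else 0) + (if i = l then Dv R p j i else 0)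
            - (if i = j then Dv R p l i else 0)) else 0 := by
    intro l
    rw [schw_inv_apply R p h, coordPDeriv_schwEntry R p hx hu,
      coordPDeriv_schwEntry R p hx hu, coordPDeriv_schwEntry R p hx hu]
    rcases eq_or_ne k l with e | e <;> simp [e]
  simp only [this, Finset.sum_ite_eq, Finset.mem_univ, if_true]
  ring

lemma geoSum0 (R : ℝ) (p v : Fin 4 → ℝ) (hx : p 1 ≠ 0) (hu : 1 - R / p 1 ≠ 0)
    (h : ∀ m : Fin 4, sv R p m ≠ 0) :
    ∑ i, ∑ j, christoffel (schwMetric R) 0 i j p * v i * v j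
      = R / p 1 ^ 2 / (1 - R / p 1) * (v 0 * v 1) := by
  simp only [Fin.sum_univ_four, christoffel_eval R p hx hu h, Dv, sv, Fin.reduceEq, if_true,
    if_false, reduceIte, Matrix.cons_val_zero, Matrix.cons_val_one, Matrix.head_cons,
    Matrix.cons_val_two, Matrix.tail_cons, Matrix.cons_val_three, Matrix.cons_val_fin_one, and_true, and_false, true_and, false_and, and_self, if_true, if_false]
  ring

lemma geoSum2 (R : ℝ) (p v : Fin 4 → ℝ) (hx : p 1 ≠ 0) (hu : 1 - R / p 1 ≠ 0)
    (h : ∀ m : Fin 4, sv R p m ≠ 0) :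
    ∑ i, ∑ j, christoffel (schwMetric R) 2 i j p * v i * v j
      = 2 / p 1 * (v 1 * v 2) - Real.sin (p 2) * Real.cos (p 2) * v 3 ^ 2 := by
  simp only [Fin.sum_univ_four, christoffel_eval R p hx hu h, Dv, sv, Fin.reduceEq, if_true,
    if_false, reduceIte, Matrix.cons_val_zero, Matrix.cons_val_one, Matrix.head_cons,
    Matrix.cons_val_two, Matrix.tail_cons, Matrix.cons_val_three, Matrix.cons_val_fin_one, and_true, and_false, true_and, false_and, and_self, if_true, if_false]
  field_simp
  ring

lemma geoSum3 (R : ℝ) (p v : Fin 4 → ℝ) (hx : p 1 ≠ 0) (hu : 1 - R / p 1 ≠ 0)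
    (hsin : Real.sin (p 2) ≠ 0)
    (h : ∀ m : Fin 4, sv R p m ≠ 0) :
    ∑ i, ∑ j, christoffel (schwMetric R) 3 i j p * v i * v j
      = 2 / p 1 * (v 1 * v 3) + 2 * (Real.cos (p 2) / Real.sin (p 2)) * (v 2 * v 3) := by
  simp only [Fin.sum_univ_four, christoffel_eval R p hx hu h, Dv, sv, Fin.reduceEq, if_true,
    if_false, reduceIte, Matrix.cons_val_zero, Matrix.cons_val_one, Matrix.head_cons,
    Matrix.cons_val_two, Matrix.tail_cons, Matrix.cons_val_three, Matrix.cons_val_fin_one, and_true, and_false, true_and, false_and, and_self, if_true, if_false]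
  field_simp
  ring


lemma const_of_deriv_zero {I : Set ℝ} (hconv : Convex ℝ I) {f : ℝ → ℝ}
    (hf : ∀ s ∈ I, HasDerivWithinAt f 0 I s) {s s' : ℝ} (hs : s ∈ I) (hs' : s' ∈ I) :
    f s = f s' := by
  have h := hconv.norm_image_sub_le_of_norm_hasDerivWithin_le (C := 0)
    (f' := fun _ => (0:ℝ)) hf (fun x hx => by simp) hs hs'
  have h0 : ‖f s' - f s‖ ≤ 0 := by simpa using h
  have := norm_le_zero_iff.mp h0
  linarith [sub_eq_zero.mp this]


/-- Along any C² geodesic `ξ = (t, r, φ, ψ)` of the Schwarzschild metric with values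
in the chart `Ω_sph`, the functions `a = (1 − R/r)·ṫ` and
`b = r²·√(φ̇² + sin²φ·ψ̇²)` are constant. -/
theorem schwarzschild_geodesic_first_integrals
    (R : ℝ) (hR : 0 < R) (I : Set ℝ) (hI : I.OrdConnected)
    (ξ ξ' ξ'' : ℝ → Fin 4 → ℝ)
    (hmem : ∀ s ∈ I, ξ s ∈ sphDomain R)
    (hξ' : ∀ s ∈ I, HasDerivWithinAt ξ (ξ' s) I s)
    (hξ'' : ∀ s ∈ I, HasDerivWithinAt ξ' (ξ'' s) I s)
    (hC2 : ContinuousOn ξ'' I)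
    (hgeo : ∀ s ∈ I, ∀ k : Fin 4,
      ξ'' s k + ∑ i, ∑ j, christoffel (schwMetric R) k i j (ξ s) * ξ' s i * ξ' s j = 0) :
    ∀ s ∈ I, ∀ s' ∈ I,
      (1 - R / ξ s 1) * ξ' s 0 = (1 - R / ξ s' 1) * ξ' s' 0 ∧
      (ξ s 1) ^ 2 * Real.sqrt ((ξ' s 2) ^ 2 + Real.sin (ξ s 2) ^ 2 * (ξ' s 3) ^ 2)
        = (ξ s' 1) ^ 2 *
          Real.sqrt ((ξ' s' 2) ^ 2 + Real.sin (ξ s' 2) ^ 2 * (ξ' s' 3) ^ 2) := by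
  have hconv : Convex ℝ I := convex_iff_ordConnected.mpr hI
  -- basic nonvanishing facts along the curve
  have hrpos : ∀ s ∈ I, 0 < ξ s 1 := fun s hs => hR.trans (hmem s hs).1
  have hx : ∀ s ∈ I, ξ s 1 ≠ 0 := fun s hs => (hrpos s hs).ne'
  have hupos : ∀ s ∈ I, 0 < 1 - R / ξ s 1 := by
    intro s hs
    have h1 : R / ξ s 1 < 1 := (div_lt_one (hrpos s hs)).mpr (hmem s hs).1
    linarith
  have hu : ∀ s ∈ I, 1 - R / ξ s 1 ≠ 0 := fun s hs => (hupos s hs).ne'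
  have hsinpos : ∀ s ∈ I, 0 < Real.sin (ξ s 2) := fun s hs =>
    Real.sin_pos_of_pos_of_lt_pi (hmem s hs).2.1 (hmem s hs).2.2
  have hsin : ∀ s ∈ I, Real.sin (ξ s 2) ≠ 0 := fun s hs => (hsinpos s hs).ne'
  have hsv : ∀ s ∈ I, ∀ m : Fin 4, sv R (ξ s) m ≠ 0 := by
    intro s hs m
    fin_cases m
    · exact hu s hs
    · exact neg_ne_zero.mpr (inv_ne_zero (hu s hs))
    · exact neg_ne_zero.mpr (pow_ne_zero 2 (hx s hs))
    · exact mul_ne_zero (neg_ne_zero.mpr (pow_ne_zero 2 (hx s hs)))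
        (pow_ne_zero 2 (hsin s hs))
  -- component derivatives
  have hcomp : ∀ (f f' : ℝ → Fin 4 → ℝ), (∀ s ∈ I, HasDerivWithinAt f (f' s) I s) →
      ∀ (i : Fin 4), ∀ s ∈ I, HasDerivWithinAt (fun s => f s i) (f' s i) I s := by
    intro f f' hf i s hs
    exact ((ContinuousLinearMap.proj i : (Fin 4 → ℝ) →L[ℝ] ℝ)).hasFDerivAt.comp_hasDerivWithinAt
      s (hf s hs)
  -- geodesic equations, componentwise
  have E0 : ∀ s ∈ I, ξ'' s 0
      = -(R / ξ s 1 ^ 2 / (1 - R / ξ s 1) * (ξ' s 0 * ξ' s 1)) := by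
    intro s hs
    have h := hgeo s hs 0
    rw [geoSum0 R (ξ s) (ξ' s) (hx s hs) (hu s hs) (hsv s hs)] at h
    linarith
  have E2 : ∀ s ∈ I, ξ'' s 2
      = -(2 / ξ s 1 * (ξ' s 1 * ξ' s 2)
          - Real.sin (ξ s 2) * Real.cos (ξ s 2) * ξ' s 3 ^ 2) := by
    intro s hs
    have h := hgeo s hs 2
    rw [geoSum2 R (ξ s) (ξ' s) (hx s hs) (hu s hs) (hsv s hs)] at h
    linarith
  have E3 : ∀ s ∈ I, ξ'' s 3
      = -(2 / ξ s 1 * (ξ' s 1 * ξ' s 3)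
          + 2 * (Real.cos (ξ s 2) / Real.sin (ξ s 2)) * (ξ' s 2 * ξ' s 3)) := by
    intro s hs
    have h := hgeo s hs 3
    rw [geoSum3 R (ξ s) (ξ' s) (hx s hs) (hu s hs) (hsin s hs) (hsv s hs)] at h
    linarith
  -- first integral a
  have haA : ∀ s ∈ I, HasDerivWithinAt (fun s => (1 - R / ξ s 1) * ξ' s 0) 0 I s := by
    intro s hs
    have hr := hcomp ξ ξ' hξ' 1 s hs
    have ht' := hcomp ξ' ξ'' hξ'' 0 s hs
    have h1 : HasDerivWithinAt (fun s => 1 - R / ξ s 1) (R * ξ' s 1 / ξ s 1 ^ 2) I s := by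
      have hdiv := (hasDerivWithinAt_const s I R).div hr (hx s hs)
      have h2 := (hasDerivWithinAt_const s I (1:ℝ)).sub hdiv
      refine h2.congr_deriv (Eq.symm ?_)
      ring
    have h3 := h1.mul ht'
    refine h3.congr_deriv (Eq.symm ?_)
    rw [E0 s hs]
    have hcancel : R / ξ s 1 ^ 2 / (1 - R / ξ s 1) * (1 - R / ξ s 1) = R / ξ s 1 ^ 2 :=
      div_mul_cancel₀ _ (hu s hs)
    linear_combination (ξ' s 0 * ξ' s 1) * hcancel
  -- first integral b² (squared angular momentum)
  have hbB : ∀ s ∈ I, HasDerivWithinAt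
      (fun s => (ξ s 1) ^ 4 * ((ξ' s 2) ^ 2 + Real.sin (ξ s 2) ^ 2 * (ξ' s 3) ^ 2)) 0 I s := by
    intro s hs
    have hr := hcomp ξ ξ' hξ' 1 s hs
    have hφ := hcomp ξ ξ' hξ' 2 s hs
    have hφ' := hcomp ξ' ξ'' hξ'' 2 s hs
    have hψ' := hcomp ξ' ξ'' hξ'' 3 s hs
    have hr4 : HasDerivWithinAt (fun s => (ξ s 1) ^ 4) (4 * ξ s 1 ^ 3 * ξ' s 1) I s := by
      have := hr.pow 4
      norm_num at this
      exact this
    have hφ2 : HasDerivWithinAt (fun s => (ξ' s 2) ^ 2) (2 * ξ' s 2 * ξ'' s 2) I s := by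
      have := hφ'.pow 2
      norm_num at this
      exact this
    have hψ2 : HasDerivWithinAt (fun s => (ξ' s 3) ^ 2) (2 * ξ' s 3 * ξ'' s 3) I s := by
      have := hψ'.pow 2
      norm_num at this
      exact this
    have hsin2 : HasDerivWithinAt (fun s => Real.sin (ξ s 2) ^ 2)
        (2 * Real.sin (ξ s 2) * Real.cos (ξ s 2) * ξ' s 2) I s :=
      ((hasDerivAt_sin_sq (ξ s 2)).comp_hasDerivWithinAt s hφ :)
    have h := hr4.mul (hφ2.add (hsin2.mul hψ2))
    refine h.congr_deriv (Eq.symm ?_)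
    simp only [Pi.add_apply, Pi.mul_apply]
    rw [E2 s hs, E3 s hs]
    field_simp [hx s hs, hsin s hs]
    ring
  -- conclude
  intro s hs s' hs'
  constructor
  · exact const_of_deriv_zero hconv haA hs hs'
  · have hf : (ξ s 1) ^ 4 * ((ξ' s 2) ^ 2 + Real.sin (ξ s 2) ^ 2 * (ξ' s 3) ^ 2)
        = (ξ s' 1) ^ 4 * ((ξ' s' 2) ^ 2 + Real.sin (ξ s' 2) ^ 2 * (ξ' s' 3) ^ 2) :=
      const_of_deriv_zero hconv hbB hs hs'
    have key : ∀ t ∈ I, (ξ t 1) ^ 2 *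
        Real.sqrt ((ξ' t 2) ^ 2 + Real.sin (ξ t 2) ^ 2 * (ξ' t 3) ^ 2)
        = Real.sqrt ((ξ t 1) ^ 4 * ((ξ' t 2) ^ 2 + Real.sin (ξ t 2) ^ 2 * (ξ' t 3) ^ 2)) := by
      intro t ht
      rw [Real.sqrt_mul (by positivity), show (ξ t 1) ^ 4 = ((ξ t 1) ^ 2) ^ 2 by ring,
        Real.sqrt_sq (by positivity)]
    rw [key s hs, key s' hs', hf]

end
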